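/- For all positive integers j, k, l and every real x with sin x ≠ 0, one has sin(j x)·sin(k x)·sin(l x)/sin²x = Σ_{m=1}^{j+k+l−2} S_{j,k,l,m} · sin(m x). -/

import Mathlib

open Real Set Finset

/-- The function 𝔪(j,k) = (1/2)·sgn(j)·sgn(k)·min(|j|,|k|). -/
noncomputable def frakm (j k : ℤ) : ℝ :=
  (1 / 2 : ℝ) * (j.sign : ℝ) * (k.sign : ℝ) * ((min |j| |k| : ℤ) : ℝ)

/-- The interaction coefficient S_{j,k,l,m}. -/
noncomputable def Scoef (j k l m : ℤ) : ℝ :=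
  if Even (j + k + l + m) then
    frakm (j + k - l) m + frakm (j - k + l) m + frakm (-j + k + l) m - frakm (j + k + l) m
  else 0

/- ## Auxiliary integer-level machinery -/

/-- Integer form of `2·frakm n m` for `m ≥ 0`: the clamp of `n` to `[-m, m]`. -/
def Tm (n m : ℤ) : ℤ := min n m + max n (-m) - n

def TS (j k l m : ℤ) : ℤ := Tm (j+k-l) m + Tm (j-k+l) m + Tm (-j+k+l) m - Tm (j+k+l) m

lemma frakm_eq (n m : ℤ) (hm : 0 ≤ m) : frakm n m = ((Tm n m : ℤ) : ℝ) / 2 := by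
  have h : n.sign * m.sign * (min |n| |m|) = Tm n m := by
    rcases hm.lt_or_eq with hm' | hm'
    · rcases lt_trichotomy n 0 with hn | hn | hn
      · rw [Int.sign_eq_neg_one_iff_neg.mpr hn, Int.sign_eq_one_iff_pos.mpr hm',
          abs_of_neg hn, abs_of_pos hm']
        unfold Tm; omega
      · subst hn
        simp only [Int.sign_zero, zero_mul, mul_zero]
        unfold Tm; omega
      · rw [Int.sign_eq_one_iff_pos.mpr hn, Int.sign_eq_one_iff_pos.mpr hm',
          abs_of_pos hn, abs_of_pos hm']
        unfold Tm; omega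
    · rw [← hm']
      simp only [Int.sign_zero, mul_zero, zero_mul]
      unfold Tm; omega
  rw [frakm, ← h, Int.cast_mul, Int.cast_mul]; ring

lemma Scoef_even (j k l m : ℤ) (hm : 0 ≤ m) (h : Even (j + k + l + m)) :
    Scoef j k l m = ((TS j k l m : ℤ) : ℝ) / 2 := by
  rw [Scoef, if_pos h, frakm_eq _ _ hm, frakm_eq _ _ hm, frakm_eq _ _ hm, frakm_eq _ _ hm, TS]
  push_cast
  ring

lemma Scoef_m0 (j k l : ℤ) : Scoef j k l 0 = 0 := by
  by_cases h : Even (j + k + l + 0)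
  · rw [Scoef_even _ _ _ _ le_rfl h]
    have : TS j k l 0 = 0 := by unfold TS Tm; omega
    rw [this]; norm_num
  · rw [Scoef, if_neg h]

lemma Scoef_k0 (j l m : ℤ) (hm : 0 ≤ m) : Scoef j 0 l m = 0 := by
  by_cases h : Even (j + 0 + l + m)
  · rw [Scoef_even _ _ _ _ hm h]
    have : TS j 0 l m = 0 := by unfold TS Tm; omega
    rw [this]; norm_num
  · rw [Scoef, if_neg h]

lemma Scoef_l0 (j k m : ℤ) (hm : 0 ≤ m) : Scoef j k 0 m = 0 := by
  by_cases h : Even (j + k + 0 + m)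
  · rw [Scoef_even _ _ _ _ hm h]
    have : TS j k 0 m = 0 := by unfold TS Tm; omega
    rw [this]; norm_num
  · rw [Scoef, if_neg h]

lemma Scoef_vanish (j k l m : ℤ) (hj : 0 ≤ j) (hk : 0 ≤ k) (hl : 0 ≤ l)
    (h : j + k + l - 1 ≤ m) : Scoef j k l m = 0 := by
  by_cases he : Even (j + k + l + m)
  · have he' := he
    rw [Int.even_iff] at he'
    rw [Scoef_even _ _ _ _ (by omega) he]
    have : TS j k l m = 0 := by unfold TS Tm; omega
    rw [this]; norm_num
  · rw [Scoef, if_neg he]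

lemma Scoef_delta (j m : ℤ) (hj : 1 ≤ j) (hm : 0 ≤ m) :
    Scoef j 1 1 m = if m = j then 1 else 0 := by
  by_cases he : Even (j + 1 + 1 + m)
  · have he' := he
    rw [Int.even_iff] at he'
    rw [Scoef_even _ _ _ _ hm he]
    by_cases hmj : m = j
    · subst hmj
      have : TS m 1 1 m = 2 := by unfold TS Tm; omega
      rw [this, if_pos rfl]; norm_num
    · have : TS j 1 1 m = 0 := by unfold TS Tm; omega
      rw [this, if_neg hmj]; norm_num
  · rw [Int.even_iff] at he
    rw [Scoef, if_neg (by rw [Int.even_iff]; omega), if_neg (by omega)]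

lemma tm_rec (n m : ℤ) (hm : 1 ≤ m) :
    Tm (n+2) m + Tm n m = Tm (n+1) (m+1) + Tm (n+1) (m-1) := by
  unfold Tm; omega

lemma ts_rec_k (j k l m : ℤ) (hm : 1 ≤ m) :
    TS j (k+2) l m + TS j k l m = TS j (k+1) l (m+1) + TS j (k+1) l (m-1) := by
  have h1 := tm_rec (j+k-l) m hm
  have h2 := tm_rec (j-k-2+l) m hm
  have h3 := tm_rec (-j+k+l) m hm
  have h4 := tm_rec (j+k+l) m hm
  unfold TS
  ring_nf at h1 h2 h3 h4 ⊢
  linarith [h1, h2, h3, h4]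

lemma ts_rec_l (j k l m : ℤ) (hm : 1 ≤ m) :
    TS j k (l+2) m + TS j k l m = TS j k (l+1) (m+1) + TS j k (l+1) (m-1) := by
  have h1 := tm_rec (j+k-l-2) m hm
  have h2 := tm_rec (j-k+l) m hm
  have h3 := tm_rec (-j+k+l) m hm
  have h4 := tm_rec (j+k+l) m hm
  unfold TS
  ring_nf at h1 h2 h3 h4 ⊢
  linarith [h1, h2, h3, h4]

lemma Scoef_rec_k (j k l m : ℤ) (hm : 1 ≤ m) :
    Scoef j (k+2) l m + Scoef j k l m
      = Scoef j (k+1) l (m+1) + Scoef j (k+1) l (m-1) := by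
  by_cases he : Even (j + k + l + m)
  · have he' := he; rw [Int.even_iff] at he'
    have h1 : Even (j + (k+2) + l + m) := by rw [Int.even_iff]; omega
    have h2 : Even (j + (k+1) + l + (m+1)) := by rw [Int.even_iff]; omega
    have h3 : Even (j + (k+1) + l + (m-1)) := by rw [Int.even_iff]; omega
    rw [Scoef_even _ _ _ _ (by omega) h1, Scoef_even _ _ _ _ (by omega) he,
      Scoef_even _ _ _ _ (by omega) h2, Scoef_even _ _ _ _ (by omega) h3,
      ← add_div, ← add_div, ← Int.cast_add, ← Int.cast_add,
      ts_rec_k j k l m hm]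
  · have he' := he; rw [Int.even_iff] at he'
    have z1 : Scoef j (k+2) l m = 0 := by
      rw [Scoef, if_neg (by rw [Int.even_iff]; omega : ¬ Even (j + (k+2) + l + m))]
    have z2 : Scoef j k l m = 0 := by rw [Scoef, if_neg he]
    have z3 : Scoef j (k+1) l (m+1) = 0 := by
      rw [Scoef, if_neg (by rw [Int.even_iff]; omega : ¬ Even (j + (k+1) + l + (m+1)))]
    have z4 : Scoef j (k+1) l (m-1) = 0 := by
      rw [Scoef, if_neg (by rw [Int.even_iff]; omega : ¬ Even (j + (k+1) + l + (m-1)))]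
    rw [z1, z2, z3, z4]

lemma Scoef_rec_l (j k l m : ℤ) (hm : 1 ≤ m) :
    Scoef j k (l+2) m + Scoef j k l m
      = Scoef j k (l+1) (m+1) + Scoef j k (l+1) (m-1) := by
  by_cases he : Even (j + k + l + m)
  · have he' := he; rw [Int.even_iff] at he'
    have h1 : Even (j + k + (l+2) + m) := by rw [Int.even_iff]; omega
    have h2 : Even (j + k + (l+1) + (m+1)) := by rw [Int.even_iff]; omega
    have h3 : Even (j + k + (l+1) + (m-1)) := by rw [Int.even_iff]; omega
    rw [Scoef_even _ _ _ _ (by omega) h1, Scoef_even _ _ _ _ (by omega) he,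
      Scoef_even _ _ _ _ (by omega) h2, Scoef_even _ _ _ _ (by omega) h3,
      ← add_div, ← add_div, ← Int.cast_add, ← Int.cast_add,
      ts_rec_l j k l m hm]
  · have he' := he; rw [Int.even_iff] at he'
    have z1 : Scoef j k (l+2) m = 0 := by
      rw [Scoef, if_neg (by rw [Int.even_iff]; omega : ¬ Even (j + k + (l+2) + m))]
    have z2 : Scoef j k l m = 0 := by rw [Scoef, if_neg he]
    have z3 : Scoef j k (l+1) (m+1) = 0 := by
      rw [Scoef, if_neg (by rw [Int.even_iff]; omega : ¬ Even (j + k + (l+1) + (m+1)))]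
    have z4 : Scoef j k (l+1) (m-1) = 0 := by
      rw [Scoef, if_neg (by rw [Int.even_iff]; omega : ¬ Even (j + k + (l+1) + (m-1)))]
    rw [z1, z2, z3, z4]

/- ## Analytic machinery -/

lemma two_cos (t x : ℝ) :
    Real.sin ((t+1)*x) + Real.sin ((t-1)*x) = 2 * Real.cos x * Real.sin (t*x) := by
  rw [show (t+1)*x = t*x + x by ring, show (t-1)*x = t*x - x by ring,
    Real.sin_add, Real.sin_sub]
  ring

lemma sum_shift (x : ℝ) (c : ℕ → ℝ) (R : ℕ) (h0 : c 0 = 0) (h1 : c (R-1) = 0)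
    (h2 : c R = 0) :
    ∑ m ∈ Finset.range R, (c (m+1) + c (m-1)) * Real.sin (m * x)
      = ∑ m ∈ Finset.range R, c m * (Real.sin (((m:ℝ)+1) * x) + Real.sin (((m:ℝ)-1) * x)) := by
  have hA : ∑ m ∈ Finset.range R, c (m+1) * Real.sin (m * x)
      = ∑ m ∈ Finset.range R, c m * Real.sin (((m:ℝ)-1) * x) := by
    have hs := Finset.sum_range_succ' (fun t : ℕ => c t * Real.sin (((t:ℝ)-1) * x)) R
    have hs2 := Finset.sum_range_succ (fun t : ℕ => c t * Real.sin (((t:ℝ)-1) * x)) R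
    rw [hs2] at hs
    simp only [h0, h2, zero_mul, add_zero] at hs
    calc ∑ m ∈ Finset.range R, c (m+1) * Real.sin (m * x)
        = ∑ i ∈ Finset.range R, c (i+1) * Real.sin ((((i+1:ℕ):ℝ)-1) * x) := by
          apply Finset.sum_congr rfl; intro i _
          congr 2
          push_cast; ring
      _ = ∑ m ∈ Finset.range R, c m * Real.sin (((m:ℝ)-1) * x) := hs.symm
  have hB : ∑ m ∈ Finset.range R, c (m-1) * Real.sin (m * x)
      = ∑ m ∈ Finset.range R, c m * Real.sin (((m:ℝ)+1) * x) := by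
    cases R with
    | zero => simp
    | succ R' =>
      have hs := Finset.sum_range_succ' (fun t : ℕ => c (t-1) * Real.sin ((t:ℝ) * x)) R'
      rw [Finset.sum_range_succ (fun m : ℕ => c m * Real.sin (((m:ℝ)+1)*x)) R']
      rw [hs]
      have hg0 : c (0-1) * Real.sin (((0:ℕ):ℝ) * x) = 0 := by
        norm_num
      have hRr : c R' = 0 := by
        have : R' + 1 - 1 = R' := by omega
        rw [← this]; exact h1
      rw [hg0, hRr, zero_mul, add_zero, add_zero]
      apply Finset.sum_congr rfl; intro i _
      have : (i+1) - 1 = i := by omega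
      rw [this]
      congr 2
      push_cast; ring
  calc ∑ m ∈ Finset.range R, (c (m+1) + c (m-1)) * Real.sin (m * x)
      = (∑ m ∈ Finset.range R, c (m+1) * Real.sin (m * x))
        + ∑ m ∈ Finset.range R, c (m-1) * Real.sin (m * x) := by
        rw [← Finset.sum_add_distrib]
        apply Finset.sum_congr rfl; intro m _; ring
    _ = ∑ m ∈ Finset.range R, c m * (Real.sin (((m:ℝ)+1) * x) + Real.sin (((m:ℝ)-1) * x)) := by
        rw [hA, hB, ← Finset.sum_add_distrib]
        apply Finset.sum_congr rfl; intro m _; ring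

lemma step_combine (x : ℝ) (c d e : ℕ → ℝ) (R : ℕ)
    (h0 : c 0 = 0) (h1 : c (R-1) = 0) (h2 : c R = 0)
    (hrec : ∀ m : ℕ, 1 ≤ m → e m + d m = c (m+1) + c (m-1)) :
    2 * Real.cos x * (∑ m ∈ Finset.range R, c m * Real.sin (m*x))
      - ∑ m ∈ Finset.range R, d m * Real.sin (m*x)
      = ∑ m ∈ Finset.range R, e m * Real.sin (m*x) := by
  have hA : 2 * Real.cos x * (∑ m ∈ Finset.range R, c m * Real.sin (m*x))
      = ∑ m ∈ Finset.range R, c m * (Real.sin (((m:ℝ)+1)*x) + Real.sin (((m:ℝ)-1)*x)) := by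
    rw [Finset.mul_sum]
    apply Finset.sum_congr rfl; intro m _
    rw [two_cos]
    ring
  rw [hA, ← sum_shift x c R h0 h1 h2, ← Finset.sum_sub_distrib]
  apply Finset.sum_congr rfl
  intro m _
  match m with
  | 0 => simp
  | (t+1) =>
    have h := hrec (t+1) (by omega)
    have ht : t + 1 - 1 = t := by omega
    rw [ht] at h ⊢
    linear_combination (-(Real.sin (((t+1:ℕ):ℝ) * x))) * h

/- ## The two-factor identity -/

lemma Qlem (x : ℝ) (hx : Real.sin x ≠ 0) :
    ∀ k j R : ℕ, 1 ≤ j → j + k + 2 ≤ R →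
      Real.sin (j * x) * Real.sin (k * x) / Real.sin x
        = ∑ m ∈ Finset.range R, Scoef j k 1 m * Real.sin (m * x) := by
  intro k
  induction k using Nat.strong_induction_on with
  | _ k ih =>
    match k with
    | 0 =>
      intro j R hj hR
      simp only [Nat.cast_zero, zero_mul, Real.sin_zero, mul_zero, zero_div]
      symm
      apply Finset.sum_eq_zero
      intro m _
      rw [Scoef_k0 _ _ _ (by positivity)]
      ring
    | 1 =>
      intro j R hj hR
      have hL : Real.sin (j * x) * Real.sin (((1:ℕ):ℝ) * x) / Real.sin x = Real.sin (j * x) := by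
        rw [Nat.cast_one, one_mul, mul_div_assoc, div_self hx, mul_one]
      rw [hL]
      have hpt : ∀ m ∈ Finset.range R, Scoef (j:ℤ) ((1:ℕ):ℤ) 1 (m:ℤ) * Real.sin ((m:ℝ) * x)
          = if m = j then Real.sin ((m:ℝ) * x) else 0 := by
        intro m _
        rw [show ((1:ℕ):ℤ) = 1 by norm_num,
          Scoef_delta (j:ℤ) (m:ℤ) (by exact_mod_cast hj) (by positivity)]
        by_cases h : m = j
        · rw [if_pos (by exact_mod_cast h), if_pos h, one_mul]
        · rw [if_neg (by exact_mod_cast h), if_neg h, zero_mul]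
      rw [Finset.sum_congr rfl hpt,
        Finset.sum_ite_eq' (Finset.range R) j (fun m : ℕ => Real.sin ((m:ℝ) * x)),
        if_pos (Finset.mem_range.mpr (by omega))]
    | (k+2) =>
      intro j R hj hR
      have e1 : Real.sin (((k+2:ℕ):ℝ) * x)
          = 2 * Real.cos x * Real.sin (((k+1:ℕ):ℝ) * x) - Real.sin ((k:ℝ) * x) := by
        have h := two_cos ((k:ℝ)+1) x
        push_cast
        ring_nf at h ⊢
        linarith [h]
      calc Real.sin (j * x) * Real.sin (((k+2:ℕ):ℝ) * x) / Real.sin x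
          = 2 * Real.cos x * (Real.sin (j * x) * Real.sin (((k+1:ℕ):ℝ) * x) / Real.sin x)
            - Real.sin (j * x) * Real.sin ((k:ℝ) * x) / Real.sin x := by
            rw [e1]; field_simp
        _ = 2 * Real.cos x * (∑ m ∈ Finset.range R,
              Scoef (j:ℤ) (((k+1:ℕ)):ℤ) 1 (m:ℤ) * Real.sin (m * x))
            - ∑ m ∈ Finset.range R, Scoef (j:ℤ) (k:ℤ) 1 (m:ℤ) * Real.sin (m * x) := by
            rw [ih (k+1) (by omega) j R hj (by omega), ih k (by omega) j R hj (by omega)]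
        _ = ∑ m ∈ Finset.range R, Scoef (j:ℤ) (((k+2:ℕ)):ℤ) 1 (m:ℤ) * Real.sin (m * x) := by
            apply step_combine x (fun m : ℕ => Scoef (j:ℤ) (((k+1:ℕ)):ℤ) 1 (m:ℤ))
              (fun m : ℕ => Scoef (j:ℤ) (k:ℤ) 1 (m:ℤ))
              (fun m : ℕ => Scoef (j:ℤ) (((k+2:ℕ)):ℤ) 1 (m:ℤ)) R
            · simp only [Nat.cast_zero]; exact Scoef_m0 _ _ _
            · apply Scoef_vanish <;> omega
            · apply Scoef_vanish <;> omega
            · intro m hm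
              have h := Scoef_rec_k (j:ℤ) (k:ℤ) 1 (m:ℤ) (by exact_mod_cast hm)
              have hc : ((m - 1 : ℕ) : ℤ) = (m:ℤ) - 1 := by omega
              push_cast
              rw [hc]
              linarith [h]

/- ## The three-factor identity -/

lemma Plem (x : ℝ) (hx : Real.sin x ≠ 0) :
    ∀ l j k R : ℕ, 1 ≤ j → 1 ≤ k → j + k + l + 2 ≤ R →
      Real.sin (j * x) * Real.sin (k * x) * Real.sin (l * x) / Real.sin x ^ 2
        = ∑ m ∈ Finset.range R, Scoef j k l m * Real.sin (m * x) := by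
  intro l
  induction l using Nat.strong_induction_on with
  | _ l ih =>
    match l with
    | 0 =>
      intro j k R hj hk hR
      simp only [Nat.cast_zero, zero_mul, Real.sin_zero, mul_zero, zero_div]
      symm
      apply Finset.sum_eq_zero
      intro m _
      rw [Scoef_l0 _ _ _ (by positivity)]
      ring
    | 1 =>
      intro j k R hj hk hR
      have hL : Real.sin (j * x) * Real.sin (k * x) * Real.sin (((1:ℕ):ℝ) * x) / Real.sin x ^ 2
          = Real.sin (j * x) * Real.sin (k * x) / Real.sin x := by
        rw [Nat.cast_one, one_mul, sq]
        rw [mul_div_mul_right _ _ hx]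
      rw [hL]
      exact Qlem x hx k j R hj (by omega)
    | (l+2) =>
      intro j k R hj hk hR
      have e1 : Real.sin (((l+2:ℕ):ℝ) * x)
          = 2 * Real.cos x * Real.sin (((l+1:ℕ):ℝ) * x) - Real.sin ((l:ℝ) * x) := by
        have h := two_cos ((l:ℝ)+1) x
        push_cast
        ring_nf at h ⊢
        linarith [h]
      calc Real.sin (j * x) * Real.sin (k * x) * Real.sin (((l+2:ℕ):ℝ) * x) / Real.sin x ^ 2
          = 2 * Real.cos x
              * (Real.sin (j * x) * Real.sin (k * x) * Real.sin (((l+1:ℕ):ℝ) * x) / Real.sin x ^ 2)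
            - Real.sin (j * x) * Real.sin (k * x) * Real.sin ((l:ℝ) * x) / Real.sin x ^ 2 := by
            rw [e1]; field_simp
        _ = 2 * Real.cos x * (∑ m ∈ Finset.range R,
              Scoef (j:ℤ) (k:ℤ) (((l+1:ℕ)):ℤ) (m:ℤ) * Real.sin (m * x))
            - ∑ m ∈ Finset.range R, Scoef (j:ℤ) (k:ℤ) (l:ℤ) (m:ℤ) * Real.sin (m * x) := by
            rw [ih (l+1) (by omega) j k R hj hk (by omega),
              ih l (by omega) j k R hj hk (by omega)]
        _ = ∑ m ∈ Finset.range R, Scoef (j:ℤ) (k:ℤ) (((l+2:ℕ)):ℤ) (m:ℤ) * Real.sin (m * x) := by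
            apply step_combine x (fun m : ℕ => Scoef (j:ℤ) (k:ℤ) (((l+1:ℕ)):ℤ) (m:ℤ))
              (fun m : ℕ => Scoef (j:ℤ) (k:ℤ) (l:ℤ) (m:ℤ))
              (fun m : ℕ => Scoef (j:ℤ) (k:ℤ) (((l+2:ℕ)):ℤ) (m:ℤ)) R
            · simp only [Nat.cast_zero]; exact Scoef_m0 _ _ _
            · apply Scoef_vanish <;> omega
            · apply Scoef_vanish <;> omega
            · intro m hm
              have h := Scoef_rec_l (j:ℤ) (k:ℤ) (l:ℤ) (m:ℤ) (by exact_mod_cast hm)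
              have hc : ((m - 1 : ℕ) : ℤ) = (m:ℤ) - 1 := by omega
              push_cast
              rw [hc]
              linarith [h]

/-- decomposition of sin(jx)·sin(kx)·sin(lx)/sin²x into modes. -/
theorem interaction_decomposition (j k l : ℕ) (hj : 0 < j) (hk : 0 < k) (hl : 0 < l)
    (x : ℝ) (hx : Real.sin x ≠ 0) :
    Real.sin (j * x) * Real.sin (k * x) * Real.sin (l * x) / (Real.sin x) ^ 2
      = ∑ m ∈ Finset.Icc 1 (j + k + l - 2), Scoef j k l m * Real.sin (m * x) := by
  have hP := Plem x hx l j k (j + k + l + 2) hj hk (by omega)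
  rw [hP]
  symm
  apply Finset.sum_subset
  · intro m hm
    rw [Finset.mem_Icc] at hm
    rw [Finset.mem_range]
    omega
  · intro m hm1 hm2
    rw [Finset.mem_range] at hm1
    rw [Finset.mem_Icc] at hm2
    rcases Nat.eq_zero_or_pos m with h0 | h0
    · subst h0
      simp
    · rw [Scoef_vanish _ _ _ _ (by omega) (by omega) (by omega) (by omega)]
      ring
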